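/- For 0 ≤ l < k ≤ n, the function λ ↦ (σ_k(λ)/σ_l(λ))^{1/(k−l)} is concave on the positive cone Γ₊ = {λ ∈ ℝⁿ : λᵢ > 0 ∀ i}. -/

import Mathlib

/-- The k-th elementary symmetric polynomial of `lam : Fin n → ℝ`. -/
noncomputable def sigmaE (n k : ℕ) (lam : Fin n → ℝ) : ℝ :=
  ∑ s ∈ Finset.powersetCard k (Finset.univ : Finset (Fin n)), ∏ i ∈ s, lam i


open Finset

variable {n : ℕ}

noncomputable def sig (x : Fin n → ℝ) (A : Finset (Fin n)) (k : ℕ) : ℝ :=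
  ∑ s ∈ A.powersetCard k, ∏ i ∈ s, x i

lemma sig_zero (x : Fin n → ℝ) (A : Finset (Fin n)) : sig x A 0 = 1 := by
  simp [sig]

lemma sig_one (x : Fin n → ℝ) (A : Finset (Fin n)) : sig x A 1 = ∑ i ∈ A, x i := by
  simp [sig, Finset.powersetCard_one, Finset.sum_map]

lemma sig_pos {x : Fin n → ℝ} {A : Finset (Fin n)} {k : ℕ} (hk : k ≤ A.card)
    (hx : ∀ i ∈ A, 0 < x i) : 0 < sig x A k := by
  apply Finset.sum_pos
  · intro s hs
    rw [Finset.mem_powersetCard] at hs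
    exact Finset.prod_pos fun i hi => hx i (hs.1 hi)
  · exact Finset.powersetCard_nonempty.2 hk

lemma sig_insert (x : Fin n → ℝ) {B : Finset (Fin n)} {i : Fin n} (h2 : i ∉ B) (k : ℕ) :
    sig x (insert i B) (k+1) = sig x B (k+1) + x i * sig x B k := by
  classical
  rw [sig, Finset.powersetCard_succ_insert h2, Finset.sum_union, sig, sig, Finset.mul_sum]
  · congr 1
    rw [Finset.sum_image]
    · refine Finset.sum_congr rfl fun s hs => ?_
      rw [Finset.mem_powersetCard] at hs
      have : i ∉ s := fun h => h2 (hs.1 h)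
      rw [Finset.prod_insert this]
    · intro s hs t ht hst
      rw [Finset.mem_coe, Finset.mem_powersetCard] at hs ht
      have his : i ∉ s := fun h => h2 (hs.1 h)
      have hit : i ∉ t := fun h => h2 (ht.1 h)
      have := congrArg (Finset.erase · i) hst
      simpa [Finset.erase_insert his, Finset.erase_insert hit] using this
  · rw [Finset.disjoint_right]
    intro s hs hs'
    rw [Finset.mem_image] at hs
    rw [Finset.mem_powersetCard] at hs'
    obtain ⟨t, ht, rfl⟩ := hs
    exact h2 (hs'.1 (Finset.mem_insert_self i t))

lemma sig_erase (x : Fin n → ℝ) {A : Finset (Fin n)} {i : Fin n} (hi : i ∈ A) (k : ℕ) :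
    sig x A (k+1) = sig x (A.erase i) (k+1) + x i * sig x (A.erase i) k := by
  conv_lhs => rw [← Finset.insert_erase hi]
  exact sig_insert x (Finset.notMem_erase _ _) k
lemma sig_sum_erase (x : Fin n → ℝ) (A : Finset (Fin n)) (k : ℕ) :
    ((k+1 : ℕ) : ℝ) * sig x A (k+1) = ∑ i ∈ A, x i * sig x (A.erase i) k := by
  classical
  have L : ((k+1 : ℕ) : ℝ) * sig x A (k+1)
      = ∑ t ∈ A.powersetCard (k+1), ∑ i ∈ t, x i * ∏ j ∈ t.erase i, x j := by
    rw [sig, Finset.mul_sum]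
    refine Finset.sum_congr rfl fun t ht => ?_
    have hc : t.card = k+1 := (Finset.mem_powersetCard.mp ht).2
    calc ((k+1:ℕ):ℝ) * ∏ i ∈ t, x i = ∑ _i ∈ t, ∏ j ∈ t, x j := by
          rw [Finset.sum_const, hc, nsmul_eq_mul]
      _ = ∑ i ∈ t, x i * ∏ j ∈ t.erase i, x j := by
          refine Finset.sum_congr rfl fun i hi => ?_
          rw [Finset.mul_prod_erase t x hi]
  rw [L]
  have R : ∀ i ∈ A, x i * sig x (A.erase i) k
      = ∑ s ∈ (A.erase i).powersetCard k, x i * ∏ j ∈ s, x j := by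
    intro i _; rw [sig, Finset.mul_sum]
  rw [Finset.sum_congr rfl R]
  rw [Finset.sum_sigma', Finset.sum_sigma']
  refine Finset.sum_nbij' (fun p => ⟨p.2, p.1.erase p.2⟩) (fun q => ⟨insert q.1 q.2, q.1⟩)
    ?_ ?_ ?_ ?_ ?_
  · rintro ⟨t, i⟩ hp
    simp only [Finset.mem_sigma, Finset.mem_powersetCard] at hp ⊢
    obtain ⟨⟨hts, htc⟩, hit⟩ := hp
    refine ⟨hts hit, ?_, ?_⟩
    · intro j hj
      rw [Finset.mem_erase] at hj ⊢
      exact ⟨hj.1, hts hj.2⟩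
    · rw [Finset.card_erase_of_mem hit, htc]; rfl
  · rintro ⟨i, s⟩ hq
    simp only [Finset.mem_sigma, Finset.mem_powersetCard] at hq ⊢
    obtain ⟨hiA, hsA, hsc⟩ := hq
    have his : i ∉ s := fun h => (Finset.mem_erase.mp (hsA h)).1 rfl
    refine ⟨⟨?_, ?_⟩, Finset.mem_insert_self _ _⟩
    · intro j hj
      rcases Finset.mem_insert.mp hj with rfl | hj
      · exact hiA
      · exact Finset.mem_of_mem_erase (hsA hj)
    · rw [Finset.card_insert_of_notMem his, hsc]
  · rintro ⟨t, i⟩ hp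
    simp only [Finset.mem_sigma, Finset.mem_powersetCard] at hp
    simp [Finset.insert_erase hp.2]
  · rintro ⟨i, s⟩ hq
    simp only [Finset.mem_sigma, Finset.mem_powersetCard] at hq
    have his : i ∉ s := fun h => (Finset.mem_erase.mp (hq.2.1 h)).1 rfl
    simp [Finset.erase_insert his]
  · rintro ⟨t, i⟩ _
    rfl
lemma h_mono {a b b' : ℝ} (ha : 0 < a) (hb : 0 < b) (hbb : b ≤ b') :
    a*b/(a+b) ≤ a*b'/(a+b') := by
  have hb' : 0 < b' := lt_of_lt_of_le hb hbb
  rw [div_le_div_iff₀ (by positivity) (by positivity)]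
  have : a*a*b ≤ a*a*b' := by nlinarith
  nlinarith

lemma milne {a b c d : ℝ} (ha : 0 < a) (hb : 0 < b) (hc : 0 < c) (hd : 0 < d) :
    a*b/(a+b) + c*d/(c+d) ≤ (a+c)*(b+d)/((a+c)+(b+d)) := by
  rw [div_add_div _ _ (by positivity) (by positivity),
    div_le_div_iff₀ (by positivity) (by positivity)]
  nlinarith [sq_nonneg (a*d - b*c), mul_pos ha hd, mul_pos hb hc, mul_pos ha hb, mul_pos hc hd]

lemma sig_key (k : ℕ) (A : Finset (Fin n)) (z : Fin n → ℝ) (hA : k + 2 ≤ A.card)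
    (hz : ∀ i ∈ A, 0 < z i) :
    ((k+2 : ℕ) : ℝ) * (sig z A (k+2) / sig z A (k+1))
      = ∑ i ∈ A, (z i * (sig z (A.erase i) (k+1) / sig z (A.erase i) k))
          / (z i + sig z (A.erase i) (k+1) / sig z (A.erase i) k) := by
  have hApos : 0 < sig z A (k+1) := sig_pos (by omega) hz
  have congr1 : ∀ i ∈ A, (z i * (sig z (A.erase i) (k+1) / sig z (A.erase i) k))
      / (z i + sig z (A.erase i) (k+1) / sig z (A.erase i) k)
      = z i * sig z (A.erase i) (k+1) / sig z A (k+1) := by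
    intro i hi
    have hzi := hz i hi
    have hcard : k + 1 ≤ (A.erase i).card := by
      rw [Finset.card_erase_of_mem hi]; omega
    have hz' : ∀ j ∈ A.erase i, 0 < z j := fun j hj => hz j (Finset.mem_of_mem_erase hj)
    have hp : 0 < sig z (A.erase i) (k+1) := sig_pos hcard hz'
    have hq : 0 < sig z (A.erase i) k := sig_pos (by omega) hz'
    rw [sig_erase z hi k]
    rw [div_eq_div_iff (by positivity) (by nlinarith)]
    field_simp
    ring
  rw [Finset.sum_congr rfl congr1, ← Finset.sum_div, ← sig_sum_erase z A (k+1)]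
  push_cast
  ring

lemma ML (k : ℕ) : ∀ (A : Finset (Fin n)) (x y : Fin n → ℝ), k + 1 ≤ A.card →
    (∀ i ∈ A, 0 < x i) → (∀ i ∈ A, 0 < y i) →
    sig x A (k+1) / sig x A k + sig y A (k+1) / sig y A k
      ≤ sig (x+y) A (k+1) / sig (x+y) A k := by
  induction k with
  | zero =>
    intro A x y _ _ _
    simp [sig_one, sig_zero, Pi.add_apply, Finset.sum_add_distrib]
  | succ k ih =>
    intro A x y hA hx hy
    have hxy : ∀ i ∈ A, 0 < (x+y) i := fun i hi => by
      have := hx i hi; have := hy i hi; simp only [Pi.add_apply]; positivity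
    have hk2 : ((k+2:ℕ):ℝ) > 0 := by positivity
    show sig x A (k+2) / sig x A (k+1) + sig y A (k+2) / sig y A (k+1)
      ≤ sig (x+y) A (k+2) / sig (x+y) A (k+1)
    have keyx := sig_key k A x hA hx
    have keyy := sig_key k A y hA hy
    have keyxy := sig_key k A (x+y) hA hxy
    rw [← mul_le_mul_iff_right₀ hk2, mul_add, keyx, keyy, keyxy, ← Finset.sum_add_distrib]
    refine Finset.sum_le_sum fun i hi => ?_
    have hxi := hx i hi
    have hyi := hy i hi
    have hcard : k + 1 ≤ (A.erase i).card := by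
      rw [Finset.card_erase_of_mem hi]; omega
    have hx' : ∀ j ∈ A.erase i, 0 < x j := fun j hj => hx j (Finset.mem_of_mem_erase hj)
    have hy' : ∀ j ∈ A.erase i, 0 < y j := fun j hj => hy j (Finset.mem_of_mem_erase hj)
    set Fx := sig x (A.erase i) (k+1) / sig x (A.erase i) k with hFx
    set Fy := sig y (A.erase i) (k+1) / sig y (A.erase i) k with hFy
    set Fxy := sig (x+y) (A.erase i) (k+1) / sig (x+y) (A.erase i) k with hFxy
    have hFxpos : 0 < Fx := div_pos (sig_pos hcard hx') (sig_pos (by omega) hx')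
    have hFypos : 0 < Fy := div_pos (sig_pos hcard hy') (sig_pos (by omega) hy')
    have hIH : Fx + Fy ≤ Fxy := ih (A.erase i) x y hcard hx' hy'
    calc x i * Fx / (x i + Fx) + y i * Fy / (y i + Fy)
        ≤ (x i + y i) * (Fx + Fy) / ((x i + y i) + (Fx + Fy)) :=
          milne hxi hFxpos hyi hFypos
      _ ≤ (x i + y i) * Fxy / ((x i + y i) + Fxy) :=
          h_mono (by positivity) (by positivity) hIH
      _ = (x+y) i * Fxy / ((x+y) i + Fxy) := by simp [Pi.add_apply]
lemma geom_superadd {ι : Type*} (s : Finset ι) (hs : s.Nonempty) (a b : ι → ℝ)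
    (ha : ∀ j ∈ s, 0 < a j) (hb : ∀ j ∈ s, 0 < b j) :
    (∏ j ∈ s, a j) ^ (1/(s.card:ℝ)) + (∏ j ∈ s, b j) ^ (1/(s.card:ℝ))
      ≤ (∏ j ∈ s, (a j + b j)) ^ (1/(s.card:ℝ)) := by
  set e : ℝ := 1/(s.card:ℝ) with he
  have hcard : (0:ℝ) < s.card := by
    have := Finset.card_pos.mpr hs; positivity
  have he0 : 0 ≤ e := by positivity
  have hab : ∀ j ∈ s, 0 < a j + b j := fun j hj => add_pos (ha j hj) (hb j hj)
  have hPpos : 0 < ∏ j ∈ s, (a j + b j) := Finset.prod_pos hab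
  have key : ∀ (f : ι → ℝ), (∀ j ∈ s, 0 < f j) → (∀ j ∈ s, f j ≤ a j + b j) →
      (∏ j ∈ s, f j) ^ e ≤ (∑ j ∈ s, e * (f j / (a j + b j))) * (∏ j ∈ s, (a j + b j)) ^ e := by
    intro f hf hfab
    have hr : ∀ j ∈ s, (0:ℝ) ≤ f j / (a j + b j) := fun j hj =>
      le_of_lt (div_pos (hf j hj) (hab j hj))
    have amgm := Real.geom_mean_le_arith_mean_weighted s (fun _ => e)
      (fun j => f j / (a j + b j)) (fun _ _ => he0) (by
        rw [Finset.sum_const, nsmul_eq_mul, he]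
        field_simp) hr
    have h1 : (∏ j ∈ s, (f j / (a j + b j)) ^ e) * (∏ j ∈ s, (a j + b j)) ^ e
        = (∏ j ∈ s, f j) ^ e := by
      rw [Real.finset_prod_rpow s _ hr e,
        ← Real.mul_rpow (Finset.prod_nonneg hr) hPpos.le,
        ← Finset.prod_mul_distrib]
      congr 1
      refine Finset.prod_congr rfl fun j hj => ?_
      field_simp
      exact mul_div_cancel_right₀ (f j) (hab j hj).ne'

    calc (∏ j ∈ s, f j) ^ e
        = (∏ j ∈ s, (f j / (a j + b j)) ^ e) * (∏ j ∈ s, (a j + b j)) ^ e := h1.symm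
      _ ≤ (∑ j ∈ s, e * (f j / (a j + b j))) * (∏ j ∈ s, (a j + b j)) ^ e := by
          apply mul_le_mul_of_nonneg_right amgm (Real.rpow_nonneg hPpos.le e)
  have ka := key a ha (fun j hj => by nlinarith [hb j hj])
  have kb := key b hb (fun j hj => by nlinarith [ha j hj])
  have hsum : (∑ j ∈ s, e * (a j / (a j + b j))) + (∑ j ∈ s, e * (b j / (a j + b j))) = 1 := by
    rw [← Finset.sum_add_distrib]
    have : ∀ j ∈ s, e * (a j / (a j + b j)) + e * (b j / (a j + b j)) = e := by
      intro j hj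
      have := hab j hj
      field_simp
    rw [Finset.sum_congr rfl this, Finset.sum_const, nsmul_eq_mul, he]
    field_simp
  nlinarith [Real.rpow_nonneg hPpos.le e, ka, kb]

lemma sig_smul (c : ℝ) (x : Fin n → ℝ) (A : Finset (Fin n)) (k : ℕ) :
    sig (fun i => c * x i) A k = c^k * sig x A k := by
  rw [sig, sig, Finset.mul_sum]
  refine Finset.sum_congr rfl fun s hs => ?_
  rw [Finset.prod_mul_distrib, Finset.prod_const, (Finset.mem_powersetCard.mp hs).2]

lemma sig_telescope {x : Fin n → ℝ} (hx : ∀ i, 0 < x i) {l k : ℕ} (hlk : l ≤ k) (hkn : k ≤ n) :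
    ∏ j ∈ Finset.Ico l k, (sig x Finset.univ (j+1) / sig x Finset.univ j)
      = sig x Finset.univ k / sig x Finset.univ l := by
  have hcard : (Finset.univ : Finset (Fin n)).card = n := Finset.card_univ.trans (Fintype.card_fin n)
  have hpos : ∀ j ≤ n, 0 < sig x Finset.univ j := fun j hj =>
    sig_pos (by rw [hcard]; exact hj) (fun i _ => hx i)
  induction k, hlk using Nat.le_induction with
  | base => simp [div_self (hpos l hkn).ne']
  | succ k hlk ih =>
    rw [Finset.prod_Ico_succ_top hlk, ih (by omega)]
    have h1 := hpos l (by omega)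
    have h2 := hpos k (by omega)
    have h3 := hpos (k+1) hkn
    field_simp

lemma f_superadd {l k : ℕ} (hl : l < k) (hkn : k ≤ n) (x y : Fin n → ℝ)
    (hx : ∀ i, 0 < x i) (hy : ∀ i, 0 < y i) :
    (sig x Finset.univ k / sig x Finset.univ l) ^ ((1:ℝ)/((k:ℝ)-l))
      + (sig y Finset.univ k / sig y Finset.univ l) ^ ((1:ℝ)/((k:ℝ)-l))
      ≤ (sig (x+y) Finset.univ k / sig (x+y) Finset.univ l) ^ ((1:ℝ)/((k:ℝ)-l)) := by
  have hcard : (Finset.univ : Finset (Fin n)).card = n :=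
    Finset.card_univ.trans (Fintype.card_fin n)
  set s := Finset.Ico l k with hs
  have hsne : s.Nonempty := Finset.nonempty_Ico.mpr hl
  have hce : ((s.card : ℕ) : ℝ) = (k:ℝ) - l := by
    rw [hs, Nat.card_Ico, Nat.cast_sub hl.le]
  set a := fun j => sig x Finset.univ (j+1) / sig x Finset.univ j with haa
  set b := fun j => sig y Finset.univ (j+1) / sig y Finset.univ j with hbb
  set c := fun j => sig (x+y) Finset.univ (j+1) / sig (x+y) Finset.univ j with hcc
  have hxy : ∀ i, 0 < (x+y) i := fun i => by
    have := hx i; have := hy i; simp only [Pi.add_apply]; positivity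
  have hpos : ∀ (z : Fin n → ℝ), (∀ i, 0 < z i) → ∀ j ≤ n, 0 < sig z Finset.univ j :=
    fun z hz j hj => sig_pos (by rw [hcard]; exact hj) (fun i _ => hz i)
  have hjn : ∀ j ∈ s, j + 1 ≤ n := fun j hj => by
    have := (Finset.mem_Ico.mp hj).2; omega
  have ha : ∀ j ∈ s, 0 < a j := fun j hj =>
    div_pos (hpos x hx _ (hjn j hj)) (hpos x hx _ (by have := hjn j hj; omega))
  have hb : ∀ j ∈ s, 0 < b j := fun j hj =>
    div_pos (hpos y hy _ (hjn j hj)) (hpos y hy _ (by have := hjn j hj; omega))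
  have habc : ∀ j ∈ s, a j + b j ≤ c j := by
    intro j hj
    exact ML j Finset.univ x y (by rw [hcard]; exact hjn j hj) (fun i _ => hx i) (fun i _ => hy i)
  have tx := sig_telescope hx hl.le hkn
  have ty := sig_telescope hy hl.le hkn
  have txy := sig_telescope hxy hl.le hkn
  rw [← tx, ← ty, ← txy, ← hce]
  calc (∏ j ∈ s, a j) ^ ((1:ℝ)/(s.card:ℝ)) + (∏ j ∈ s, b j) ^ ((1:ℝ)/(s.card:ℝ))
      ≤ (∏ j ∈ s, (a j + b j)) ^ ((1:ℝ)/(s.card:ℝ)) := geom_superadd s hsne a b ha hb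
    _ ≤ (∏ j ∈ s, c j) ^ ((1:ℝ)/(s.card:ℝ)) := by
        apply Real.rpow_le_rpow (Finset.prod_nonneg fun j hj => by
          have := ha j hj; have := hb j hj; positivity)
          (Finset.prod_le_prod (fun j hj => by
            have := ha j hj; have := hb j hj; positivity) habc)
          (by positivity)

lemma f_smul {l k : ℕ} (hl : l < k) (hkn : k ≤ n) {c : ℝ} (hc : 0 < c)
    (x : Fin n → ℝ) (hx : ∀ i, 0 < x i) :
    (sig (c • x) Finset.univ k / sig (c • x) Finset.univ l) ^ ((1:ℝ)/((k:ℝ)-l))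
      = c * (sig x Finset.univ k / sig x Finset.univ l) ^ ((1:ℝ)/((k:ℝ)-l)) := by
  have hcard : (Finset.univ : Finset (Fin n)).card = n :=
    Finset.card_univ.trans (Fintype.card_fin n)
  have hK : 0 < sig x Finset.univ k := sig_pos (by omega) (fun i _ => hx i)
  have hL : 0 < sig x Finset.univ l := sig_pos (by omega) (fun i _ => hx i)
  have e1 : sig (c • x) Finset.univ k = c^k * sig x Finset.univ k := by
    rw [← sig_smul]; congr 1
  have e2 : sig (c • x) Finset.univ l = c^l * sig x Finset.univ l := by
    rw [← sig_smul]; congr 1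
  rw [e1, e2]
  have e3 : c^k * sig x Finset.univ k / (c^l * sig x Finset.univ l)
      = c^(k-l) * (sig x Finset.univ k / sig x Finset.univ l) := by
    rw [pow_sub₀ c hc.ne' hl.le]
    field_simp
  rw [e3, Real.mul_rpow (by positivity) (by positivity)]
  congr 1
  rw [← Real.rpow_natCast c (k-l), ← Real.rpow_mul hc.le]
  have hne : (k:ℝ) - l ≠ 0 := by
    have : (l:ℝ) < k := by exact_mod_cast hl
    linarith
  have : ((k-l : ℕ):ℝ) * ((1:ℝ)/((k:ℝ)-l)) = 1 := by
    rw [Nat.cast_sub hl.le]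
    field_simp
  rw [this, Real.rpow_one]

theorem stmt8 (n k l : ℕ) (hl : l < k) (hkn : k ≤ n) :
    ConcaveOn ℝ {lam : Fin n → ℝ | ∀ i, 0 < lam i}
      (fun lam => (sigmaE n k lam / sigmaE n l lam) ^ ((1 : ℝ) / ((k : ℝ) - l))) := by
  have hsig : ∀ (m : ℕ) (lam : Fin n → ℝ), sigmaE n m lam = sig lam Finset.univ m :=
    fun m lam => rfl
  have hconv : Convex ℝ {lam : Fin n → ℝ | ∀ i, 0 < lam i} := by
    have : {lam : Fin n → ℝ | ∀ i, 0 < lam i}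
        = Set.pi Set.univ (fun _ : Fin n => Set.Ioi (0:ℝ)) := by
      ext lam; simp [Set.mem_pi]
    rw [this]
    exact convex_pi fun i _ => convex_Ioi 0
  refine ⟨hconv, ?_⟩
  intro x hx y hy a b ha hb hab
  simp only [Set.mem_setOf_eq] at hx hy
  simp only [smul_eq_mul]
  rcases eq_or_lt_of_le ha with rfl | ha'
  · have hb1 : b = 1 := by linarith
    simp [hb1]
  rcases eq_or_lt_of_le hb with rfl | hb'
  · have ha1 : a = 1 := by linarith
    simp [ha1]
  have hax : ∀ i, 0 < (a • x) i := fun i => by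
    have := hx i; simp only [Pi.smul_apply, smul_eq_mul]; positivity
  have hby : ∀ i, 0 < (b • y) i := fun i => by
    have := hy i; simp only [Pi.smul_apply, smul_eq_mul]; positivity
  have key := f_superadd hl hkn (a • x) (b • y) hax hby
  rw [f_smul hl hkn ha' x hx, f_smul hl hkn hb' y hy] at key
  simp only [hsig]
  exact key
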